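/- The Lie algebra Witt(A) = {f∂ : f ∈ A} with bracket [f∂, g∂] = (fg' - gf')∂ is self-centralizing: for any nonzero f∂, the centralizer C(f∂) = {g∂ : [f∂, g∂] = 0} is one-dimensional over k. -/

import Mathlib

open HahnSeries

lemma deriv_coeff {k : Type} [Field k] (g : LaurentSeries k) (n : ℤ) :
    (LaurentSeries.derivative k g).coeff n = ((n + 1 : ℤ) : k) * g.coeff (n + 1) := by
  rw [LaurentSeries.derivative_apply, LaurentSeries.hasseDeriv_coeff]
  push_cast
  rw [Ring.choose_one_right, zsmul_eq_mul]
  push_cast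
  ring

lemma smul_comm' {k : Type} [Field k] (c : k) (x y : LaurentSeries k) :
    x * (c • y) = c • (x * y) := by
  rw [← single_zero_mul_eq_smul, ← single_zero_mul_eq_smul, mul_left_comm]

lemma smul_assoc' {k : Type} [Field k] (c : k) (x y : LaurentSeries k) :
    (c • x) * y = c • (x * y) := by
  rw [← single_zero_mul_eq_smul, ← single_zero_mul_eq_smul, mul_assoc]

lemma mul_coeff_lowest {k : Type} [Field k] (x y : LaurentSeries k) (a b : ℤ)
    (hx : ∀ i < a, x.coeff i = 0) (hy : ∀ j < b, y.coeff j = 0) :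
    (x * y).coeff (a + b) = x.coeff a * y.coeff b := by
  rw [HahnSeries.coeff_mul]
  rw [Finset.sum_eq_single (a, b)]
  · rintro ⟨i, j⟩ hij hne
    simp only [Finset.mem_addAntidiagonal, Function.mem_support] at hij
    obtain ⟨hxi, hyj, hsum⟩ := hij
    rcases lt_or_ge i a with h | h
    · exact absurd (hx i h) hxi
    rcases lt_or_ge j b with h' | h'
    · exact absurd (hy j h') hyj
    have hia : i = a := by omega
    have hjb : j = b := by omega
    exact absurd (Prod.ext hia hjb) hne
  · intro hnot
    rw [Finset.mem_addAntidiagonal] at hnot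
    push_neg at hnot
    by_cases h1 : x.coeff a = 0
    · rw [h1, zero_mul]
    by_cases h2 : y.coeff b = 0
    · rw [h2, mul_zero]
    exact absurd rfl (hnot (Function.mem_support.mpr h1) (Function.mem_support.mpr h2))

/-- If `f * g' = g * f'` with `f, g ≠ 0`, then `g.order = f.order`. -/
lemma order_eq_of_comm {k : Type} [Field k] [CharZero k] (f g : LaurentSeries k)
    (hf : f ≠ 0) (hg : g ≠ 0)
    (heq : f * LaurentSeries.derivative k g = g * LaurentSeries.derivative k f) :
    g.order = f.order := by
  set m := f.order with hm
  set n := g.order with hn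
  have hfm : f.coeff m ≠ 0 := (HahnSeries.coeff_order_eq_zero.not.mpr hf)
  have hgn : g.coeff n ≠ 0 := (HahnSeries.coeff_order_eq_zero.not.mpr hg)
  have hlhs : (f * LaurentSeries.derivative k g).coeff (m + (n - 1)) =
      f.coeff m * ((n : k) * g.coeff n) := by
    rw [mul_coeff_lowest f _ m (n - 1)
      (fun i hi => HahnSeries.coeff_eq_zero_of_lt_order hi)
      (fun j hj => by
        rw [deriv_coeff]
        rw [HahnSeries.coeff_eq_zero_of_lt_order (by omega), mul_zero]),
      deriv_coeff]
    norm_num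
  have hrhs : (g * LaurentSeries.derivative k f).coeff (n + (m - 1)) =
      g.coeff n * ((m : k) * f.coeff m) := by
    rw [mul_coeff_lowest g _ n (m - 1)
      (fun i hi => HahnSeries.coeff_eq_zero_of_lt_order hi)
      (fun j hj => by
        rw [deriv_coeff]
        rw [HahnSeries.coeff_eq_zero_of_lt_order (by omega), mul_zero]),
      deriv_coeff]
    norm_num
  have hmn : m + (n - 1) = n + (m - 1) := by ring
  have key : f.coeff m * ((n : k) * g.coeff n) = g.coeff n * ((m : k) * f.coeff m) := by
    rw [← hlhs, ← hrhs, heq, hmn]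
  have hcast : (n : k) = (m : k) := by
    have h2 : (n : k) * (f.coeff m * g.coeff n) = (m : k) * (f.coeff m * g.coeff n) := by
      linear_combination key
    exact mul_right_cancel₀ (mul_ne_zero hfm hgn) h2
  exact_mod_cast hcast

/-- `Witt(A)` is self-centralizing: for a stable algebra `A` (subalgebra of the
Laurent series field closed under formal differentiation) and nonzero `f ∈ A`,
the centralizer of `f∂` in `Witt(A)` is exactly the one-dimensional space of
scalar multiples of `f`. -/
theorem stmt1 {k : Type} [Field k] [CharZero k]
    (A : Subalgebra k (LaurentSeries k))
    (hA : ∀ f ∈ A, LaurentSeries.derivative k f ∈ A)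
    (f : LaurentSeries k) (hfA : f ∈ A) (hf : f ≠ 0) :
    {g : LaurentSeries k | g ∈ A ∧
        f * LaurentSeries.derivative k g - g * LaurentSeries.derivative k f = 0}
      = {g : LaurentSeries k | ∃ c : k, g = c • f} := by
  ext g
  simp only [Set.mem_setOf_eq]
  constructor
  · rintro ⟨-, hcomm⟩
    rw [sub_eq_zero] at hcomm
    by_cases hg : g = 0
    · exact ⟨0, by simp [hg]⟩
    set m := f.order with hm
    have hfm : f.coeff m ≠ 0 := (HahnSeries.coeff_order_eq_zero.not.mpr hf)
    set c := g.coeff m / f.coeff m with hc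
    refine ⟨c, ?_⟩
    by_contra hne
    set h := g - c • f with hh
    have hh0 : h ≠ 0 := fun h0 => hne (by rwa [hh, sub_eq_zero] at h0)
    have hhcomm : f * LaurentSeries.derivative k h = h * LaurentSeries.derivative k f := by
      rw [hh, map_sub, map_smul, mul_sub, sub_mul, smul_comm', smul_assoc', hcomm, mul_comm]
    have horder : h.order = m := order_eq_of_comm f h hf hh0 hhcomm
    have hcoeff : h.coeff m = 0 := by
      rw [hh]
      simp only [HahnSeries.coeff_sub, HahnSeries.coeff_smul, hc, smul_eq_mul]
      field_simp
      simp
    exact (HahnSeries.coeff_order_eq_zero.not.mpr hh0) (horder ▸ hcoeff)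
  · rintro ⟨c, rfl⟩
    have hmem : c • f ∈ A := by
      rw [← single_zero_mul_eq_smul]
      have he : (HahnSeries.single (0:ℤ) c : LaurentSeries k)
          = algebraMap k (LaurentSeries k) c := by
        rw [HahnSeries.algebraMap_apply', PowerSeries.algebraMap_apply (A := k),
          HahnSeries.ofPowerSeries_C, HahnSeries.C_apply]
        simp
      have h1 : (HahnSeries.single (0:ℤ) c : LaurentSeries k) ∈ A := by
        rw [he]; exact A.algebraMap_mem c
      exact A.mul_mem h1 hfA
    refine ⟨hmem, ?_⟩
    rw [map_smul, smul_comm', smul_assoc', mul_comm, sub_self]
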